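/- Let (e, f) be a hyperbolic pair over ℂ, and set v := (e + f)/√2 and w := −i(e − f)/√2 (i = Complex.I), so that Q v = 1, Q w = 1 and polar Q v w = 0. Then 1 − ι e * ι f = i * ι v * ι w in the Clifford algebra. (This expresses the factor 1 − e f of the element Σ₂ₙ as a product of two orthogonal unit vectors, up to the scalar i.) -/

import Mathlib

open CliffordAlgebra QuadraticMap

/-- For a hyperbolic pair `(e, f)` over `ℂ`, setting `v = (e + f)/√2` and
`w = -i(e - f)/√2`, one has `Q v = 1`, `Q w = 1`, `polar Q v w = 0`, and
`1 - ι e * ι f = i • (ι v * ι w)` in the Clifford algebra. -/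
theorem one_sub_ef_eq_i_vw {V : Type*} [AddCommGroup V] [Module ℂ V]
    (Q : QuadraticForm ℂ V) (e f : V)
    (hQe : Q e = 0) (hQf : Q f = 0) (hef : polar Q e f = 2)
    (v w : V)
    (hv : v = ((Real.sqrt 2 : ℂ))⁻¹ • (e + f))
    (hw : w = (-Complex.I * ((Real.sqrt 2 : ℂ))⁻¹) • (e - f)) :
    Q v = 1 ∧ Q w = 1 ∧ polar Q v w = 0 ∧
      1 - ι Q e * ι Q f = Complex.I • (ι Q v * ι Q w) := by
  have hI : Complex.I * Complex.I = -1 := Complex.I_mul_I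
  have hs : ((Real.sqrt 2 : ℝ) : ℂ) * ((Real.sqrt 2 : ℝ) : ℂ) = 2 := by
    norm_cast
    exact Real.mul_self_sqrt (by norm_num)
  have hsne : ((Real.sqrt 2 : ℝ) : ℂ) ≠ 0 := by
    simp [Real.sqrt_ne_zero'.2 (by norm_num : (0:ℝ) < 2)]
  have hinv : ((Real.sqrt 2 : ℂ))⁻¹ * ((Real.sqrt 2 : ℂ))⁻¹ = 2⁻¹ := by
    rw [← mul_inv]; rw [hs]
  have hQef : Q (e + f) = 2 := by
    have h := QuadraticMap.map_add Q e f
    rw [h, hQe, hQf, hef]; ring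
  have hQemf : Q (e - f) = -2 := by
    have h := QuadraticMap.map_add Q e (-f)
    rw [show e + -f = e - f from (sub_eq_add_neg e f).symm] at h
    rw [h, hQe, QuadraticMap.map_neg, hQf, polar_neg_right, hef]; ring
  have hQv : Q v = 1 := by
    rw [hv, QuadraticMap.map_smul, hQef, hinv, smul_eq_mul]; norm_num
  have hQw : Q w = 1 := by
    rw [hw, QuadraticMap.map_smul, hQemf, smul_eq_mul]
    field_simp
    linear_combination -hs - 2 * hI
  have hpvw : polar Q v w = 0 := by
    rw [hv, hw, polar_smul_left, polar_smul_right]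
    have h0 : polar Q (e + f) (e - f) = 0 := by
      rw [polar_add_left, polar_sub_right, polar_sub_right,
        polar_self, polar_self, hQe, hQf, polar_comm Q f e, hef]
      ring
    rw [h0]; simp
  refine ⟨hQv, hQw, hpvw, ?_⟩
  have hfe : ι Q f * ι Q e = algebraMap ℂ _ 2 - ι Q e * ι Q f := by
    have h := CliffordAlgebra.ι_mul_ι_add_swap (Q := Q) e f
    rw [hef] at h
    exact eq_sub_of_add_eq' h
  have hee : ι Q e * ι Q e = 0 := by
    rw [CliffordAlgebra.ι_sq_scalar, hQe, map_zero]
  have hff : ι Q f * ι Q f = 0 := by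
    rw [CliffordAlgebra.ι_sq_scalar, hQf, map_zero]
  rw [hv, hw, _root_.map_smul, _root_.map_smul, map_add, _root_.map_sub]
  rw [smul_mul_smul_comm]
  have hprod : (ι Q e + ι Q f) * (ι Q e - ι Q f)
      = algebraMap ℂ _ 2 - (2 : ℂ) • (ι Q e * ι Q f) := by
    rw [add_mul, mul_sub, mul_sub, hee, hff, hfe, two_smul]
    abel
  rw [hprod, smul_sub, smul_smul, smul_sub, smul_smul, smul_smul]
  have hk : Complex.I * ((↑(Real.sqrt 2):ℂ)⁻¹ * (-Complex.I * (↑(Real.sqrt 2):ℂ)⁻¹))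
      = 2⁻¹ := by
    rw [show Complex.I * ((↑(Real.sqrt 2):ℂ)⁻¹ * (-Complex.I * (↑(Real.sqrt 2):ℂ)⁻¹))
        = -(Complex.I * Complex.I) * ((↑(Real.sqrt 2):ℂ)⁻¹ * (↑(Real.sqrt 2):ℂ)⁻¹) by ring,
      hI, hinv]
    ring
  have hk2 : Complex.I * ((↑(Real.sqrt 2):ℂ)⁻¹ * (-Complex.I * (↑(Real.sqrt 2):ℂ)⁻¹) * 2)
      = 1 := by
    rw [show Complex.I * ((↑(Real.sqrt 2):ℂ)⁻¹ * (-Complex.I * (↑(Real.sqrt 2):ℂ)⁻¹) * 2)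
        = Complex.I * ((↑(Real.sqrt 2):ℂ)⁻¹ * (-Complex.I * (↑(Real.sqrt 2):ℂ)⁻¹)) * 2 by ring,
      hk]
    norm_num
  rw [hk, hk2, one_smul, Algebra.algebraMap_eq_smul_one, smul_smul]
  norm_num
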